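/- For every loopless digraph D, χ⃗_f(D) ≤ χ⃗*(D) ≤ χ⃗_c(D), where χ⃗_f is the fractional dichromatic number, χ⃗* the star dichromatic number, and χ⃗_c the circular dichromatic number. -/

import Mathlib

open Finset

variable {V : Type*}

/-- `v :: l` forms a directed cycle of the digraph with arc relation `E`:
the vertices are pairwise distinct and each one has an arc to the next, cyclically. -/
def IsDicycle (E : V → V → Prop) (v : V) (l : List V) : Prop :=
  (v :: l).Nodup ∧ List.Chain E v (l ++ [v])

/-- The vertex set `A` induces an acyclic subdigraph of the digraph `E`:
no directed cycle of `E` has all of its vertices in `A`. -/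
def AcyclicOn (E : V → V → Prop) (A : Set V) : Prop :=
  ∀ v l, IsDicycle E v l → ¬ (∀ x ∈ v :: l, x ∈ A)

/-- The open arc of length 1 in `ℝ/pℤ` starting at (the image of) `a`. -/
def unitArc (p a : ℝ) : Set (AddCircle p) :=
  (fun x : ℝ => (x : AddCircle p)) '' Set.Ioo a (a + 1)

/-- An acyclic `p`-colouring of the digraph `E` : the preimage of every open arc
of length 1 induces an acyclic subdigraph. -/
def IsAcyclicColouring (E : V → V → Prop) (p : ℝ) (c : V → AddCircle p) : Prop :=
  ∀ a : ℝ, AcyclicOn E (c ⁻¹' unitArc p a)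

/-- The star dichromatic number of a digraph. -/
noncomputable def starDichromatic (E : V → V → Prop) : ℝ :=
  sInf {p : ℝ | 1 ≤ p ∧ ∃ c : V → AddCircle p, IsAcyclicColouring E p c}

/-- A weak circular `p`-colouring in the sense of Bokal et al. -/
def IsWeakCircularColouring (E : V → V → Prop) (p : ℝ) (c : V → AddCircle p) : Prop :=
  (∀ u w, E u w → c u = c w ∨
    ∃ r : ℝ, r ∈ Set.Ico (0 : ℝ) p ∧ (r : AddCircle p) = c w - c u ∧ 1 ≤ r) ∧
  ∀ t : AddCircle p, AcyclicOn E (c ⁻¹' {t})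

/-- The circular dichromatic number of a digraph. -/
noncomputable def circularDichromatic (E : V → V → Prop) : ℝ :=
  sInf {p : ℝ | 1 ≤ p ∧ ∃ c : V → AddCircle p, IsWeakCircularColouring E p c}

/-- The fractional dichromatic number: the optimal value of the covering linear
program over the acyclic vertex subsets. -/
noncomputable def fracDichromatic [Fintype V] [DecidableEq V] (E : V → V → Prop) : ℝ :=
  sInf {r : ℝ | ∃ x : Finset V → ℝ, (∀ A, 0 ≤ x A) ∧
    (∀ A : Finset V, x A ≠ 0 → AcyclicOn E ↑A) ∧
    (∀ v : V, 1 ≤ ∑ A ∈ Finset.univ.filter (fun A : Finset V => v ∈ A), x A) ∧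
    r = ∑ A : Finset V, x A}

/-- The cyclic interval `{i, i+1, ..., i+d-1}` in `ℤ/kℤ`. -/
def cycInterval (k : ℕ) (i : ZMod k) (d : ℕ) : Set (ZMod k) :=
  {j : ZMod k | ∃ t : ℕ, t < d ∧ j = i + (t : ZMod k)}

/-- An acyclic `(k,d)`-colouring of the digraph `E`. -/
def IsAcyclicKDColouring (E : V → V → Prop) (k d : ℕ) (c : V → ZMod k) : Prop :=
  ∀ i : ZMod k, AcyclicOn E (c ⁻¹' cycInterval k i d)

/-- The dichromatic number: the least `k` such that the vertex set can be partitioned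
into `k` classes each inducing an acyclic subdigraph. -/
noncomputable def dichromatic (E : V → V → Prop) : ℕ :=
  sInf {k : ℕ | ∃ c : V → Fin k, ∀ i : Fin k, AcyclicOn E (c ⁻¹' {i})}

/-- `v :: l` forms a cycle of the simple graph `G` (of length at least 3). -/
def IsGraphCycle (G : SimpleGraph V) (v : V) (l : List V) : Prop :=
  3 ≤ (v :: l).length ∧ (v :: l).Nodup ∧ List.Chain G.Adj v (l ++ [v])

/-- The vertex set `A` induces a forest (acyclic subgraph) in the simple graph `G`. -/
def ForestOn (G : SimpleGraph V) (A : Set V) : Prop :=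
  ∀ v l, IsGraphCycle G v l → ¬ (∀ x ∈ v :: l, x ∈ A)

/-- A `(k,d)`-tree-colouring of a graph. -/
def IsTreeColouring (G : SimpleGraph V) (k d : ℕ) (c : V → ZMod k) : Prop :=
  ∀ i : ZMod k, ForestOn G (c ⁻¹' cycInterval k i d)

/-- The circular vertex arboricity of a graph. -/
noncomputable def circularVertexArboricity (G : SimpleGraph V) : ℝ :=
  sInf {r : ℝ | ∃ k d : ℕ, 1 ≤ d ∧ d ≤ k ∧
    (∃ c : V → ZMod k, IsTreeColouring G k d c) ∧ r = (k : ℝ) / d}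

/-- `E` is an orientation of the simple graph `G`: for each edge exactly one of the
two possible arcs is present, and there are no other arcs. -/
def IsOrientation (G : SimpleGraph V) (E : V → V → Prop) : Prop :=
  ∀ u w, ((E u w ∨ E w u) ↔ G.Adj u w) ∧ ¬ (E u w ∧ E w u)

/-- The star dichromatic number of a graph: the maximum over all orientations. -/
noncomputable def starDichromaticGraph (G : SimpleGraph V) : ℝ :=
  sSup {r : ℝ | ∃ E : V → V → Prop, IsOrientation G E ∧ r = starDichromatic E}

/-- The fractional dichromatic number of a graph: the maximum over all orientations. -/
noncomputable def fracDichromaticGraph [Fintype V] [DecidableEq V] (G : SimpleGraph V) : ℝ :=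
  sSup {r : ℝ | ∃ E : V → V → Prop, IsOrientation G E ∧ r = fracDichromatic E}

/-- The fractional chromatic number of a graph: the optimal value of the covering
linear program over the independent vertex subsets. -/
noncomputable def fractionalChromatic [Fintype V] [DecidableEq V] (G : SimpleGraph V) : ℝ :=
  sInf {r : ℝ | ∃ x : Finset V → ℝ, (∀ A, 0 ≤ x A) ∧
    (∀ A : Finset V, x A ≠ 0 → ∀ u ∈ A, ∀ w ∈ A, ¬ G.Adj u w) ∧
    (∀ v : V, 1 ≤ ∑ A ∈ Finset.univ.filter (fun A : Finset V => v ∈ A), x A) ∧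
    r = ∑ A : Finset V, x A}

/-- A `(k,d)`-colouring of a graph in the sense of Vince: colours of adjacent vertices
have circular `k`-distance at least `d`. -/
def IsVinceColouring (G : SimpleGraph V) (k d : ℕ) (c : V → ZMod k) : Prop :=
  ∀ u w, G.Adj u w → d ≤ (c u - c w).val ∧ d ≤ (c w - c u).val

/-- Vince's star (circular) chromatic number of a graph. -/
noncomputable def starChromatic (G : SimpleGraph V) : ℝ :=
  sInf {r : ℝ | ∃ k d : ℕ, 1 ≤ d ∧ d ≤ k ∧
    (∃ c : V → ZMod k, IsVinceColouring G k d c) ∧ r = (k : ℝ) / d}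

/-- The circulant digraph `C⃗(k,d)` on `ℤ/kℤ`: each vertex `i` has the outgoing arcs
`(i, i+d), (i, i+d+1), …, (i, i+k-1)`. -/
def circulantDigraph (k d : ℕ) : ZMod k → ZMod k → Prop :=
  fun i j => ∃ t : ℕ, d ≤ t ∧ t < k ∧ j = i + (t : ZMod k)

/-- The directed cycle `C⃗_n` on `ℤ/nℤ`. -/
def dirCycle (n : ℕ) : ZMod n → ZMod n → Prop :=
  fun i j => j = i + 1

/-- The digraph `D^s` obtained from `D` by adding a dominating source `none`. -/
def addSource (E : V → V → Prop) : Option V → Option V → Prop :=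
  fun a b => match a, b with
  | none, some _ => True
  | some u, some w => E u w
  | _, none => False

/-- The wheel graph `W_k`: a cycle on `ℤ/kℤ` together with a hub `none` adjacent to
every cycle vertex. -/
def wheelGraph (k : ℕ) : SimpleGraph (Option (ZMod k)) :=
  SimpleGraph.fromRel (fun a b => match a, b with
    | none, some _ => True
    | some i, some j => j = i + 1
    | _, none => False)
section Aux
open MeasureTheory

lemma acyclicOn_subsingleton (E : V → V → Prop) (hE : ∀ v, ¬ E v v)
    (A : Set V) (hA : A.Subsingleton) : AcyclicOn E A := by
  rintro v l ⟨hnd, hch⟩ hmem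
  have hv : v ∈ A := hmem v (by simp)
  have hl : l = [] := by
    cases l with
    | nil => rfl
    | cons x l' =>
      exfalso
      have hx : x ∈ A := hmem x (by simp)
      have : x = v := hA hx hv
      simp [this] at hnd
  subst hl
  simp only [List.nil_append, List.chain_cons] at hch
  exact hE v (List.isChain_pair.1 hch)

-- chain restriction lemma

lemma chain_and_pred {E : V → V → Prop} {P : V → Prop} :
    ∀ {v : V} {L : List V}, List.Chain E v L → P v → (∀ x ∈ L, P x) →
      List.Chain (fun u w => E u w ∧ P u ∧ P w) v L := by
  intro v L h hv hL
  induction L generalizing v with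
  | nil => exact List.IsChain.singleton _
  | cons b l ih =>
    obtain ⟨hab, h'⟩ := List.isChain_cons_cons.1 h
    have hb : P b := hL b (by simp)
    exact List.isChain_cons_cons.2 ⟨⟨hab, hv, hb⟩, ih h' hb (fun x hx => hL x (by simp [hx]))⟩

-- monotone along chain

lemma chain_le {R : V → V → Prop} (f : V → ℝ) (hf : ∀ u w, R u w → f w ≤ f u) :
    ∀ {v : V} {L : List V}, List.Chain R v L → ∀ x ∈ L, f x ≤ f v := by
  intro v L h
  induction L generalizing v with
  | nil => simp
  | cons b l ih =>
    obtain ⟨hab, h'⟩ := List.isChain_cons_cons.1 h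
    intro x hx
    rcases List.mem_cons.1 hx with rfl | hx
    · exact hf _ _ hab
    · exact (ih h' x hx).trans (hf _ _ hab)

lemma chain_const {R : V → V → Prop} (f : V → ℝ) (hf : ∀ u w, R u w → f w ≤ f u)
    {v : V} {l : List V} (h : List.Chain R v (l ++ [v])) :
    ∀ x ∈ v :: l, f x = f v := by
  intro x hx
  rcases List.mem_cons.1 hx with rfl | hx
  · rfl
  · obtain ⟨l₁, l₂, rfl⟩ := List.append_of_mem hx
    rw [List.append_assoc, List.cons_append] at h
    have h2 := (List.isChain_cons_split.1 h).2
    have h1 : f x ≤ f v := chain_le f hf h x (by simp)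
    have h2' : f v ≤ f x := chain_le f hf h2 v (by simp)
    linarith

lemma coe_eq_coe_iff {p x y : ℝ} :
    (x : AddCircle p) = (y : AddCircle p) ↔ ∃ k : ℤ, x - y = k * p := by
  rw [Eq.comm, QuotientAddGroup.eq_iff_sub_mem, AddSubgroup.mem_zmultiples_iff]
  constructor
  · rintro ⟨k, hk⟩
    refine ⟨-k, ?_⟩
    rw [zsmul_eq_mul] at hk
    push_cast
    linarith
  · rintro ⟨k, hk⟩
    refine ⟨-k, ?_⟩
    rw [zsmul_eq_mul]
    push_cast
    linarith

lemma weak_to_acyclic {E : V → V → Prop} {p : ℝ} (hp : 1 ≤ p) {c : V → AddCircle p}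
    (hc : IsWeakCircularColouring E p c) : IsAcyclicColouring E p c := by
  intro a v l hcyc hmem
  obtain ⟨hnd, hch⟩ := hcyc
  classical
  -- choose lifts
  have hsel : ∀ x : V, c x ∈ unitArc p a → ∃ t, t ∈ Set.Ioo a (a+1) ∧ (t : AddCircle p) = c x := by
    intro x hx
    obtain ⟨t, ht, h2⟩ := hx
    exact ⟨t, ht, h2⟩
  set f : V → ℝ := fun x => if h : c x ∈ unitArc p a then (hsel x h).choose else 0 with hf
  have hfIoo : ∀ x, c x ∈ unitArc p a → f x ∈ Set.Ioo a (a+1) := by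
    intro x h; rw [hf]; simp only [dif_pos h]; exact (hsel x h).choose_spec.1
  have hfc : ∀ x, c x ∈ unitArc p a → ((f x : ℝ) : AddCircle p) = c x := by
    intro x h; rw [hf]; simp only [dif_pos h]; exact (hsel x h).choose_spec.2
  set R : V → V → Prop := fun u w => E u w ∧ (c u ∈ unitArc p a) ∧ (c w ∈ unitArc p a) with hR
  have hstep : ∀ u w, R u w → f w ≤ f u := by
    rintro u w ⟨huw, hu, hw⟩
    have h1 := hfIoo u hu
    have h2 := hfIoo w hw
    rcases hc.1 u w huw with heq | ⟨r, hr, hrc, hr1⟩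
    · -- equal colours: f w = f u
      have : ((f w : ℝ) : AddCircle p) = ((f u : ℝ) : AddCircle p) := by
        rw [hfc u hu, hfc w hw, heq]
      obtain ⟨k, hk⟩ := coe_eq_coe_iff.1 this
      have hb : |f w - f u| < 1 := by
        rw [abs_lt]; constructor <;> [skip; skip] <;>
          · obtain ⟨h1a, h1b⟩ := h1; obtain ⟨h2a, h2b⟩ := h2; linarith
      rcases eq_or_ne k 0 with rfl | hk0
      · simp at hk; linarith [hk]
      · exfalso
        have : (1:ℝ) ≤ |(k:ℝ)| * p := by
          have : (1:ℝ) ≤ |(k:ℝ)| := by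
            have := Int.one_le_abs hk0
            calc (1:ℝ) = ((1:ℤ):ℝ) := by norm_num
            _ ≤ ((|k|:ℤ):ℝ) := by exact_mod_cast this
            _ = |(k:ℝ)| := by push_cast; ring
          nlinarith
        rw [hk, abs_mul, abs_of_pos (by linarith : (0:ℝ) < p)] at hb
        linarith
    · -- jump case
      have : ((f w - f u : ℝ) : AddCircle p) = ((r : ℝ) : AddCircle p) := by
        have hsub : ((f w - f u : ℝ) : AddCircle p) = ((f w : ℝ) : AddCircle p) - ((f u : ℝ) : AddCircle p) := by
          exact QuotientAddGroup.mk_sub _ _ _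
        rw [hsub, hfc u hu, hfc w hw, ← hrc]
      obtain ⟨k, hk⟩ := coe_eq_coe_iff.1 this
      -- f w - f u = r + k p, with f w - f u ∈ (-1,1), r ∈ [1,p)
      have hb1 : f w - f u < 1 := by obtain ⟨h1a, h1b⟩ := h1; obtain ⟨h2a, h2b⟩ := h2; linarith
      have hkp : f w - f u = r + k * p := by linarith
      have hkneg : k ≤ -1 := by
        by_contra hcon
        push_neg at hcon
        have : (0:ℤ) ≤ k := by omega
        have : (0:ℝ) ≤ (k:ℝ) * p := mul_nonneg (by exact_mod_cast this) (by linarith)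
        linarith
      have : (k:ℝ) * p ≤ -p := by
        have : (k:ℝ) ≤ -1 := by exact_mod_cast hkneg
        nlinarith
      linarith [hr.2]
  -- restricted chain
  have hchR : List.Chain R v (l ++ [v]) := by
    apply chain_and_pred hch (hmem v (by simp))
    intro x hx
    rcases List.mem_append.1 hx with h | h
    · exact hmem x (by simp [h])
    · simp at h; rw [h]; exact hmem v (by simp)
  have hconst := chain_const f hstep hchR
  -- all vertices in fibre of c v
  refine hc.2 (c v) v l ⟨hnd, hch⟩ ?_
  intro x hx
  have hfx := hconst x hx
  have hxA : c x ∈ unitArc p a := hmem x hx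
  have hvA : c v ∈ unitArc p a := hmem v (by simp)
  simp only [Set.mem_preimage, Set.mem_singleton_iff]
  rw [← hfc x hxA, ← hfc v hvA, hfx]

lemma circ_nonempty [Fintype V] [Nonempty V] (E : V → V → Prop) (hE : ∀ v, ¬ E v v) :
    ∃ p : ℝ, 1 ≤ p ∧ ∃ c : V → AddCircle p, IsWeakCircularColouring E p c := by
  classical
  obtain ⟨n, e⟩ : ∃ n, Nonempty (V ≃ Fin n) := ⟨Fintype.card V, ⟨Fintype.equivFin V⟩⟩
  obtain ⟨e⟩ := e
  have hn1 : 1 ≤ n := by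
    rcases Nat.eq_zero_or_pos n with rfl | h
    · exact (e (Classical.arbitrary V)).elim0
    · exact h
  set p : ℝ := (n : ℝ) with hp
  have hp1 : (1:ℝ) ≤ p := by rw [hp]; exact_mod_cast hn1
  have hp0 : (0:ℝ) < p := lt_of_lt_of_le one_pos hp1
  refine ⟨p, hp1, ?_⟩
  set g : V → ℝ := fun v => ((e v : ℕ) : ℝ) with hg
  have hg0 : ∀ v, 0 ≤ g v := fun v => by positivity
  have hgp : ∀ v, g v < p := fun v => by
    show ((e v : ℕ) : ℝ) < (n : ℝ)
    exact_mod_cast (e v).2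
  set c : V → AddCircle p := fun v => ((g v : ℝ) : AddCircle p) with hc
  have hcinj : Function.Injective c := by
    intro u w h
    obtain ⟨k, hk⟩ := coe_eq_coe_iff.1 h
    have hk0 : k = 0 := by
      rcases lt_trichotomy k 0 with h' | h' | h'
      · exfalso
        have h1 : (k:ℝ) ≤ -1 := by exact_mod_cast (by omega : k ≤ -1)
        nlinarith [hg0 u, hg0 w, hgp u, hgp w]
      · exact h'
      · exfalso
        have h1 : (1:ℝ) ≤ (k:ℝ) := by exact_mod_cast (by omega : 1 ≤ k)
        nlinarith [hg0 u, hg0 w, hgp u, hgp w]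
    rw [hk0] at hk
    simp only [Int.cast_zero, zero_mul, sub_eq_zero] at hk
    have : (e u : ℕ) = (e w : ℕ) := by
      exact_mod_cast (show ((e u : ℕ) : ℝ) = ((e w : ℕ) : ℝ) from hk)
    exact e.injective (Fin.ext this)
  refine ⟨c, ?_, ?_⟩
  · intro u w huw
    right
    have hne : u ≠ w := by rintro rfl; exact hE u huw
    have hgne : g u ≠ g w := by
      intro h
      apply hne
      apply e.injective; apply Fin.ext
      exact_mod_cast (show ((e u : ℕ) : ℝ) = ((e w : ℕ) : ℝ) from h)
    have hint : ∃ m : ℤ, g w - g u = m := ⟨(e w : ℕ) - ((e u : ℕ) : ℤ), by rw [hg]; push_cast; ring⟩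
    rcases lt_or_gt_of_ne hgne with h | h
    · refine ⟨g w - g u, ⟨by linarith [hg0 u], by linarith [hgp w, hg0 u]⟩, ?_, ?_⟩
      · exact (QuotientAddGroup.mk_sub _ _ _ : (((g w - g u) : ℝ) : AddCircle p) = _)
      · obtain ⟨m, hm⟩ := hint
        have : (1:ℤ) ≤ m := by
          by_contra hcon
          push_neg at hcon
          have : (m:ℝ) ≤ 0 := by exact_mod_cast (by omega : m ≤ 0)
          linarith [hm]
        have : (1:ℝ) ≤ (m:ℝ) := by exact_mod_cast this
        rw [hm]; linarith
    · refine ⟨g w - g u + p, ⟨by linarith [hg0 w, hgp u], ?_⟩, ?_, ?_⟩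
      · obtain ⟨m, hm⟩ := hint
        have hm1 : m ≤ -1 := by
          by_contra hcon
          push_neg at hcon
          have : (0:ℝ) ≤ (m:ℝ) := by exact_mod_cast (by omega : 0 ≤ m)
          linarith [hm]
        have : (m:ℝ) ≤ -1 := by exact_mod_cast hm1
        rw [hm]; linarith
      · rw [hc]
        have h1 : (((g w - g u + p) : ℝ) : AddCircle p) = (((g w - g u) : ℝ) : AddCircle p) := by
          apply coe_eq_coe_iff.2 ⟨1, by push_cast; ring⟩
        rw [h1]
        exact (QuotientAddGroup.mk_sub _ _ _ : (((g w - g u) : ℝ) : AddCircle p) = _)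
      · obtain ⟨m, hm⟩ := hint
        have hm1 : m ≤ -1 := by
          by_contra hcon
          push_neg at hcon
          have : (0:ℝ) ≤ (m:ℝ) := by exact_mod_cast (by omega : 0 ≤ m)
          linarith [hm]
        have h2 : (m:ℝ) ≤ -1 := by exact_mod_cast hm1
        have h3 : -p < g w - g u := by linarith [hg0 w, hgp u]
        have h4 : -p < (m:ℝ) := by rw [← hm]; exact h3
        have h5 : (-n : ℤ) < m := by exact_mod_cast (by rw [hp] at h4; push_cast at h4 ⊢; linarith : ((-n : ℤ) : ℝ) < (m:ℝ))
        have h6 : ((-(n:ℤ) + 1 : ℤ) : ℝ) ≤ (m:ℝ) := by exact_mod_cast (by omega : -(n:ℤ) + 1 ≤ m)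
        rw [hm, hp]
        push_cast at h6 ⊢
        linarith
  · intro t
    apply acyclicOn_subsingleton E hE
    intro u hu w hw
    simp only [Set.mem_preimage, Set.mem_singleton_iff] at hu hw
    exact hcinj (hu.trans hw.symm)

def Uset (p b : ℝ) : Set ℝ := ⋃ k : ℤ, Set.Ioo (b + k * p - 1) (b + k * p)

lemma Uset_measurable (p b : ℝ) : MeasurableSet (Uset p b) :=
  MeasurableSet.iUnion fun _ => measurableSet_Ioo

lemma mem_unitArc_iff {p a b : ℝ} {z : AddCircle p} (hb : ((b : ℝ) : AddCircle p) = z) :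
    z ∈ unitArc p a ↔ a ∈ Uset p b := by
  constructor
  · rintro ⟨x, hx, hxz⟩
    have hxb : (x : AddCircle p) = (b : AddCircle p) := hxz.trans hb.symm
    obtain ⟨k, hk⟩ := coe_eq_coe_iff.1 hxb
    refine Set.mem_iUnion.2 ⟨k, ?_⟩
    simp only [Set.mem_Ioo]
    exact ⟨by linarith [hx.2], by linarith [hx.1]⟩
  · intro ha
    obtain ⟨k, hk⟩ := Set.mem_iUnion.1 ha
    simp only [Set.mem_Ioo] at hk
    refine ⟨b + k * p, ⟨by linarith [hk.2], by linarith [hk.1]⟩, ?_⟩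
    rw [← hb]
    exact coe_eq_coe_iff.2 ⟨k, by ring⟩

lemma volume_Ico_inter_Uset {p b : ℝ} (hp : 1 ≤ p) (hb : b ∈ Set.Ico 0 p) :
    volume (Set.Ico 0 p ∩ Uset p b) = 1 := by
  obtain ⟨hb0, hbp⟩ := hb
  have hkey : Set.Ico 0 p ∩ Uset p b
      = (Set.Ico 0 p ∩ Set.Ioo (b - 1) b) ∪ Set.Ioo (b + p - 1) p := by
    ext x
    simp only [Set.mem_inter_iff, Set.mem_union, Set.mem_Ico, Set.mem_Ioo, Uset,
      Set.mem_iUnion]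
    constructor
    · rintro ⟨⟨hx0, hxp⟩, k, hk1, hk2⟩
      rcases lt_trichotomy k 0 with hk | hk | hk
      · exfalso
        have : (k:ℝ) ≤ -1 := by exact_mod_cast (by omega : k ≤ -1)
        nlinarith
      · subst hk; left; simp at hk1 hk2; exact ⟨⟨hx0, hxp⟩, by linarith, by linarith⟩
      · rcases eq_or_lt_of_le (by exact_mod_cast hk : (1:ℤ) ≤ k) with hk' | hk'
        · right
          rw [← hk'] at hk1 hk2
          push_cast at hk1 hk2
          constructor <;> linarith
        · exfalso
          have : (2:ℝ) ≤ (k:ℝ) := by exact_mod_cast (by omega : (2:ℤ) ≤ k)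
          nlinarith
    · rintro (⟨⟨hx0, hxp⟩, h1, h2⟩ | ⟨h1, h2⟩)
      · exact ⟨⟨hx0, hxp⟩, 0, by push_cast; linarith, by push_cast; linarith⟩
      · refine ⟨⟨by linarith, h2⟩, 1, by push_cast; linarith, by push_cast; linarith⟩
  rw [hkey]
  rcases le_or_gt 1 b with h1 | h1
  · -- b ≥ 1 : first interval fully inside, second empty
    have e1 : Set.Ico 0 p ∩ Set.Ioo (b - 1) b = Set.Ioo (b - 1) b := by
      apply Set.inter_eq_self_of_subset_right
      intro x hx
      exact ⟨by linarith [hx.1], by linarith [hx.2]⟩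
    have e2 : Set.Ioo (b + p - 1) p = (∅ : Set ℝ) := by
      apply Set.Ioo_eq_empty
      intro hlt
      linarith
    rw [e1, e2, Set.union_empty, Real.volume_Ioo]
    norm_num
  · -- b < 1
    have e1 : Set.Ico 0 p ∩ Set.Ioo (b - 1) b = Set.Ico 0 b := by
      ext x
      simp only [Set.mem_inter_iff, Set.mem_Ico, Set.mem_Ioo]
      constructor
      · rintro ⟨⟨h2, h3⟩, h4, h5⟩; exact ⟨h2, h5⟩
      · rintro ⟨h2, h3⟩
        exact ⟨⟨h2, by linarith⟩, by linarith, h3⟩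
    rw [e1]
    have hdisj : Disjoint (Set.Ico 0 b) (Set.Ioo (b + p - 1) p) := by
      apply Set.disjoint_left.2
      rintro x ⟨hx1, hx2⟩ ⟨hy1, hy2⟩
      linarith
    rw [measure_union hdisj measurableSet_Ioo, Real.volume_Ico, Real.volume_Ioo,
      ← ENNReal.ofReal_add (by linarith) (by linarith)]
    rw [show b - 0 + (p - (b + p - 1)) = (1:ℝ) by ring, ENNReal.ofReal_one]

lemma star_mem_frac [Fintype V] [DecidableEq V] {E : V → V → Prop} {p : ℝ}
    (hp : 1 ≤ p) (c : V → AddCircle p) (hc : IsAcyclicColouring E p c) :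
    ∃ x : Finset V → ℝ, (∀ A, 0 ≤ x A) ∧
      (∀ A : Finset V, x A ≠ 0 → AcyclicOn E ↑A) ∧
      (∀ v : V, 1 ≤ ∑ A ∈ Finset.univ.filter (fun A : Finset V => v ∈ A), x A) ∧
      p = ∑ A : Finset V, x A := by
  classical
  have hp0 : (0:ℝ) < p := lt_of_lt_of_le one_pos hp
  have hy : ∀ v, ∃ b : ℝ, b ∈ Set.Ico 0 p ∧ ((b : ℝ) : AddCircle p) = c v := by
    intro v
    obtain ⟨x, hx⟩ := Quotient.exists_rep (c v)
    refine ⟨toIcoMod hp0 0 x, by simpa using toIcoMod_mem_Ico' hp0 x, ?_⟩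
    rw [← hx]
    exact coe_eq_coe_iff.2 ⟨-(toIcoDiv hp0 0 x), by
      have h2 := toIcoMod_sub_self hp0 0 x
      rw [zsmul_eq_mul] at h2
      push_cast at h2 ⊢
      linarith⟩
  choose y hy1 hy2 using hy
  set S : Finset V → Set ℝ := fun A =>
    Set.Ico 0 p ∩ {a | ∀ v : V, v ∈ A ↔ a ∈ Uset p (y v)} with hS
  have hSm : ∀ A, MeasurableSet (S A) := by
    intro A
    have : S A = Set.Ico 0 p ∩
        ⋂ v : V, (if v ∈ A then Uset p (y v) else (Uset p (y v))ᶜ) := by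
      rw [hS]
      ext a
      simp only [Set.mem_inter_iff, Set.mem_setOf_eq, Set.mem_iInter, and_congr_right_iff]
      intro _
      constructor
      · intro h v
        by_cases hv : v ∈ A
        · rw [if_pos hv]; exact (h v).1 hv
        · rw [if_neg hv]; exact fun hu => hv ((h v).2 hu)
      · intro h v
        have := h v
        by_cases hv : v ∈ A
        · rw [if_pos hv] at this; exact ⟨fun _ => this, fun _ => hv⟩
        · rw [if_neg hv] at this; exact ⟨fun h' => absurd h' hv, fun h' => absurd h' this⟩
    rw [this]
    refine measurableSet_Ico.inter (MeasurableSet.iInter fun v => ?_)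
    by_cases hv : v ∈ A
    · rw [if_pos hv]; exact Uset_measurable p (y v)
    · rw [if_neg hv]; exact (Uset_measurable p (y v)).compl
  have hSd : ∀ (s : Finset (Finset V)), (↑s : Set (Finset V)).PairwiseDisjoint S := by
    intro s A _ B _ hAB
    apply Set.disjoint_left.2
    rintro a ⟨_, hA⟩ ⟨_, hB⟩
    exact hAB (Finset.ext fun v => (hA v).trans (hB v).symm)
  have hsum : ∀ (s : Finset (Finset V)),
      volume (⋃ A ∈ s, S A) = ∑ A ∈ s, volume (S A) :=
    fun s => measure_biUnion_finset (hSd s) (fun A _ => hSm A)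
  have hfin : ∀ A, volume (S A) ≠ ⊤ := by
    intro A
    have : volume (S A) ≤ volume (Set.Ico 0 p) := measure_mono Set.inter_subset_left
    rw [Real.volume_Ico] at this
    exact ne_top_of_le_ne_top ENNReal.ofReal_ne_top this
  refine ⟨fun A => (volume (S A)).toReal, fun A => ENNReal.toReal_nonneg, ?_, ?_, ?_⟩
  · intro A hA
    have hne : (S A).Nonempty := by
      rw [Set.nonempty_iff_ne_empty]
      intro h
      apply hA
      show (volume (S A)).toReal = 0
      rw [h, measure_empty, ENNReal.toReal_zero]
    obtain ⟨a, _, ha⟩ := hne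
    have : (↑A : Set V) = c ⁻¹' unitArc p a := by
      ext v
      rw [Finset.mem_coe, ha v, Set.mem_preimage, mem_unitArc_iff (hy2 v)]
    rw [this]
    exact hc a
  · intro v
    have hun : (⋃ A ∈ Finset.univ.filter (fun A : Finset V => v ∈ A), S A)
        = Set.Ico 0 p ∩ Uset p (y v) := by
      ext a
      simp only [Set.mem_iUnion, Finset.mem_filter, Finset.mem_univ, true_and]
      constructor
      · rintro ⟨A, hvA, haA⟩
        exact ⟨haA.1, (haA.2 v).1 hvA⟩
      · rintro ⟨ha1, ha2⟩
        refine ⟨Finset.univ.filter (fun w => a ∈ Uset p (y w)), by simp [ha2], ha1, ?_⟩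
        intro w
        simp only [Finset.mem_filter, Finset.mem_univ, true_and]
    have := hsum (Finset.univ.filter (fun A : Finset V => v ∈ A))
    rw [hun, volume_Ico_inter_Uset hp (hy1 v)] at this
    rw [← ENNReal.toReal_sum (fun A _ => hfin A), ← this, ENNReal.toReal_one]
  · have hun : (⋃ A ∈ (Finset.univ : Finset (Finset V)), S A) = Set.Ico 0 p := by
      ext a
      simp only [Set.mem_iUnion]
      constructor
      · rintro ⟨A, -, haA⟩
        exact haA.1
      · intro ha
        refine ⟨Finset.univ.filter (fun w => a ∈ Uset p (y w)), Finset.mem_univ _, ha, ?_⟩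
        intro w
        simp only [Finset.mem_filter, Finset.mem_univ, true_and]
    have := hsum Finset.univ
    rw [hun, Real.volume_Ico] at this
    rw [← ENNReal.toReal_sum (fun A _ => hfin A), ← this, ENNReal.toReal_ofReal (by linarith)]
    norm_num

end Aux

/-- `χ⃗_f(D) ≤ χ⃗*(D) ≤ χ⃗_c(D)` for every loopless digraph. -/
theorem stmt5 {V : Type*} [Fintype V] [DecidableEq V] [Nonempty V]
    (E : V → V → Prop) (hE : ∀ v, ¬ E v v) :
    fracDichromatic E ≤ starDichromatic E ∧
    starDichromatic E ≤ circularDichromatic E := by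
  have h12 : {p : ℝ | 1 ≤ p ∧ ∃ c : V → AddCircle p, IsWeakCircularColouring E p c}
      ⊆ {p : ℝ | 1 ≤ p ∧ ∃ c : V → AddCircle p, IsAcyclicColouring E p c} := by
    rintro p ⟨hp, c, hc⟩
    exact ⟨hp, c, weak_to_acyclic hp hc⟩
  have h23 : {p : ℝ | 1 ≤ p ∧ ∃ c : V → AddCircle p, IsAcyclicColouring E p c}
      ⊆ {r : ℝ | ∃ x : Finset V → ℝ, (∀ A, 0 ≤ x A) ∧
        (∀ A : Finset V, x A ≠ 0 → AcyclicOn E ↑A) ∧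
        (∀ v : V, 1 ≤ ∑ A ∈ Finset.univ.filter (fun A : Finset V => v ∈ A), x A) ∧
        r = ∑ A : Finset V, x A} := by
    rintro p ⟨hp, c, hc⟩
    exact star_mem_frac hp c hc
  have hne_c : {p : ℝ | 1 ≤ p ∧ ∃ c : V → AddCircle p, IsWeakCircularColouring E p c}.Nonempty := by
    obtain ⟨p, hp, c, hc⟩ := circ_nonempty E hE
    exact ⟨p, hp, c, hc⟩
  have bdd_star : BddBelow {p : ℝ | 1 ≤ p ∧ ∃ c : V → AddCircle p, IsAcyclicColouring E p c} :=
    ⟨1, fun p hp => hp.1⟩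
  have bdd_f : BddBelow {r : ℝ | ∃ x : Finset V → ℝ, (∀ A, 0 ≤ x A) ∧
        (∀ A : Finset V, x A ≠ 0 → AcyclicOn E ↑A) ∧
        (∀ v : V, 1 ≤ ∑ A ∈ Finset.univ.filter (fun A : Finset V => v ∈ A), x A) ∧
        r = ∑ A : Finset V, x A} := by
    refine ⟨0, ?_⟩
    rintro r ⟨x, hx0, -, -, rfl⟩
    exact Finset.sum_nonneg fun A _ => hx0 A
  constructor
  · exact csInf_le_csInf bdd_f (hne_c.mono h12) h23
  · exact csInf_le_csInf bdd_star hne_c h12
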